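/- There exists a constant C ≥ 0, depending only on k0 and k1, such that for every admissible ψ one has |Z(ψ)| ≤ C·D(ψ). Consequently the set { Z(ψ)/D(ψ) : ψ admissible with D(ψ) ≠ 0 } is nonempty and bounded above, so μ_c is a finite real number. -/

import Mathlib

open MeasureTheory Set

noncomputable section

/-- A function is admissible if it is twice continuously differentiable on `[0,1]`
and vanishes at the endpoints (the C² representatives of `H₀¹(0,1) ∩ H²(0,1)`). -/
def Admissible (ψ : ℝ → ℝ) : Prop :=
  ContDiffOn ℝ 2 ψ (Set.Icc (0:ℝ) 1) ∧ ψ 0 = 0 ∧ ψ 1 = 0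

/-- The boundary energy `Z(ψ) = k1·ψ′(1)² + k0·ψ′(0)²`. -/
def Z (k0 k1 : ℝ) (ψ : ℝ → ℝ) : ℝ :=
  k1 * (deriv ψ 1) ^ 2 + k0 * (deriv ψ 0) ^ 2

/-- The Dirichlet-type energy `D(ψ) = ∫₀¹ ψ″(y)² dy`. -/
def D (ψ : ℝ → ℝ) : ℝ :=
  ∫ y in (0:ℝ)..1, (deriv (deriv ψ) y) ^ 2

/-- The set of Rayleigh quotients `Z(ψ)/D(ψ)` over admissible `ψ` with `D(ψ) ≠ 0`. -/
def mucSet (k0 k1 : ℝ) : Set ℝ :=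
  { r : ℝ | ∃ ψ : ℝ → ℝ, Admissible ψ ∧ D ψ ≠ 0 ∧ r = Z k0 k1 ψ / D ψ }

/-- The critical viscosity `μ_c`. -/
def muc (k0 k1 : ℝ) : ℝ := sSup (mucSet k0 k1)

end

/-- Cauchy–Schwarz for interval integrals of continuous functions. -/
lemma sq_intervalIntegral_le {a b : ℝ} (hab : a ≤ b) {f : ℝ → ℝ}
    (hf : ContinuousOn f (Icc a b)) :
    (∫ x in a..b, f x) ^ 2 ≤ (b - a) * ∫ x in a..b, f x ^ 2 := by
  have huIcc : uIcc a b = Icc a b := uIcc_of_le hab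
  have hfi : IntervalIntegrable f volume a b := by
    apply ContinuousOn.intervalIntegrable; rwa [huIcc]
  have hf2 : ContinuousOn (fun x => f x ^ 2) (Icc a b) := hf.pow 2
  have hf2i : IntervalIntegrable (fun x => f x ^ 2) volume a b := by
    apply ContinuousOn.intervalIntegrable; rwa [huIcc]
  rcases eq_or_lt_of_le hab with rfl | hlt
  · simp
  · set L : ℝ := b - a with hL
    have hLpos : 0 < L := by simp [hL]; linarith
    set A : ℝ := ∫ x in a..b, f x with hA
    set c : ℝ := A / L with hc
    have key : (0:ℝ) ≤ ∫ x in a..b, (f x - c) ^ 2 :=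
      intervalIntegral.integral_nonneg hab (fun x _ => sq_nonneg _)
    have expand : (∫ x in a..b, (f x - c) ^ 2)
        = (∫ x in a..b, f x ^ 2) - 2 * c * A + c ^ 2 * L := by
      have heq : ∀ x : ℝ, (f x - c) ^ 2 = f x ^ 2 - (2 * c) * f x + c ^ 2 := by
        intro x; ring
      simp_rw [heq]
      rw [intervalIntegral.integral_add ((hf2i.sub (hfi.const_mul _)))
          intervalIntegrable_const,
        intervalIntegral.integral_sub hf2i (hfi.const_mul _),
        intervalIntegral.integral_const_mul, intervalIntegral.integral_const]
      simp [hL, hA]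
      ring
    rw [expand] at key
    have hcL : c * L = A := by rw [hc]; field_simp [hLpos.ne']
    have h2 : (0:ℝ) ≤ (∫ x in a..b, f x ^ 2) - A ^ 2 / L := by
      have : c ^ 2 * L = A ^ 2 / L := by
        rw [hc]; field_simp
      rw [this] at key
      have : 2 * c * A = 2 * (A ^ 2 / L) := by
        rw [hc]; field_simp
      rw [this] at key
      linarith
    have : A ^ 2 / L ≤ ∫ x in a..b, f x ^ 2 := by linarith
    calc A ^ 2 = (A ^ 2 / L) * L := by field_simp
    _ ≤ (∫ x in a..b, f x ^ 2) * L := by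
        exact mul_le_mul_of_nonneg_right this hLpos.le
    _ = L * ∫ x in a..b, f x ^ 2 := by ring

/-- The key analytic estimate: for admissible `ψ`, both squared boundary derivatives
are bounded by `D ψ`, and `D ψ ≥ 0`. -/
lemma boundary_sq_le_D {ψ : ℝ → ℝ} (hψ : Admissible ψ) :
    (deriv ψ 0) ^ 2 ≤ D ψ ∧ (deriv ψ 1) ^ 2 ≤ D ψ ∧ 0 ≤ D ψ := by
  obtain ⟨hC2, h0, h1⟩ := hψ
  have h01 : (0:ℝ) < 1 := one_pos
  have hU : UniqueDiffOn ℝ (Icc (0:ℝ) 1) := uniqueDiffOn_Icc h01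
  set g : ℝ → ℝ := derivWithin ψ (Icc 0 1) with hg
  set h : ℝ → ℝ := derivWithin g (Icc 0 1) with hh
  have hψdiff : DifferentiableOn ℝ ψ (Icc 0 1) := hC2.differentiableOn (by norm_num)
  have hgC1 : ContDiffOn ℝ 1 g (Icc 0 1) := hC2.derivWithin hU (by norm_num)
  have hgdiff : DifferentiableOn ℝ g (Icc 0 1) := hgC1.differentiableOn (by norm_num)
  have hgcont : ContinuousOn g (Icc 0 1) := hgC1.continuousOn
  have hhcont : ContinuousOn h (Icc 0 1) := (hgC1.derivWithin (m := 0) hU (by norm_num)).continuousOn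
  -- has-derivative facts at interior points
  have hψd : ∀ y ∈ Ioo (0:ℝ) 1, HasDerivAt ψ (g y) y := by
    intro y hy
    exact ((hψdiff y (Ioo_subset_Icc_self hy)).hasDerivWithinAt).hasDerivAt
      (Icc_mem_nhds hy.1 hy.2)
  have hgd : ∀ y ∈ Ioo (0:ℝ) 1, HasDerivAt g (h y) y := by
    intro y hy
    exact ((hgdiff y (Ioo_subset_Icc_self hy)).hasDerivWithinAt).hasDerivAt
      (Icc_mem_nhds hy.1 hy.2)
  -- second derivative agrees with h on the open interval
  have hsecond : ∀ y ∈ Ioo (0:ℝ) 1, deriv (deriv ψ) y = h y := by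
    intro y hy
    have hev : deriv ψ =ᶠ[nhds y] g := by
      filter_upwards [isOpen_Ioo.mem_nhds hy] with z hz
      exact (hψd z hz).deriv
    rw [hev.deriv_eq]
    exact (hgd y hy).deriv
  -- D ψ = ∫ h²
  have hDint : D ψ = ∫ y in (0:ℝ)..1, h y ^ 2 := by
    apply intervalIntegral.integral_congr_ae
    filter_upwards [(Set.countable_singleton (1:ℝ)).ae_notMem volume] with x hx hmem
    rw [uIoc_of_le h01.le] at hmem
    have hxIoo : x ∈ Ioo (0:ℝ) 1 := ⟨hmem.1, lt_of_le_of_ne hmem.2 (by simpa using hx)⟩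
    rw [hsecond x hxIoo]
  have hh2int : IntervalIntegrable (fun y => h y ^ 2) volume 0 1 := by
    apply ContinuousOn.intervalIntegrable
    rw [uIcc_of_le h01.le]; exact hhcont.pow 2
  have hDnonneg : 0 ≤ D ψ := by
    rw [hDint]; exact intervalIntegral.integral_nonneg h01.le (fun x _ => sq_nonneg _)
  -- Rolle: g vanishes somewhere
  obtain ⟨c, hc, hgc⟩ := exists_hasDerivAt_eq_zero h01 hC2.continuousOn
    (h0.trans h1.symm) hψd
  have hsub : ∀ {a b : ℝ}, 0 ≤ a → b ≤ 1 → Icc a b ⊆ Icc (0:ℝ) 1 :=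
    fun ha hb => Icc_subset_Icc ha hb
  -- FTC on [0, c] and [c, 1]
  have hftc : ∀ a b : ℝ, 0 ≤ a → a ≤ b → b ≤ 1 →
      (∫ y in a..b, h y) = g b - g a := by
    intro a b ha hab hb
    apply intervalIntegral.integral_eq_sub_of_hasDeriv_right_of_le hab
      (hgcont.mono (hsub ha hb))
    · intro x hx
      have hxIoo : x ∈ Ioo (0:ℝ) 1 := ⟨lt_of_le_of_lt ha hx.1, lt_of_lt_of_le hx.2 hb⟩
      exact (hgd x hxIoo).hasDerivWithinAt
    · apply ContinuousOn.intervalIntegrable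
      rw [uIcc_of_le hab]; exact hhcont.mono (hsub ha hb)
  -- bound for ∫ h² on subintervals
  have hmono : ∀ a b : ℝ, 0 ≤ a → a ≤ b → b ≤ 1 →
      (∫ y in a..b, h y ^ 2) ≤ ∫ y in (0:ℝ)..1, h y ^ 2 := by
    intro a b ha hab hb
    apply intervalIntegral.integral_mono_interval ha hab hb
    · filter_upwards with x
      simp only [Pi.zero_apply]
      exact sq_nonneg _
    · exact hh2int
  -- bound (g a)² ≤ D ψ for a = 0 and a = 1
  have hg0 : (g 0) ^ 2 ≤ D ψ := by
    have hfc := hftc 0 c le_rfl hc.1.le hc.2.le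
    rw [hgc] at hfc
    have hcs := sq_intervalIntegral_le hc.1.le (hhcont.mono (hsub le_rfl hc.2.le))
    have : (g 0) ^ 2 = (∫ y in (0:ℝ)..c, h y) ^ 2 := by rw [hfc]; ring
    rw [this, hDint]
    calc (∫ y in (0:ℝ)..c, h y) ^ 2 ≤ (c - 0) * ∫ y in (0:ℝ)..c, h y ^ 2 := hcs
    _ ≤ 1 * ∫ y in (0:ℝ)..1, h y ^ 2 := by
        apply mul_le_mul (by linarith [hc.2]) (hmono 0 c le_rfl hc.1.le hc.2.le)
          (intervalIntegral.integral_nonneg hc.1.le (fun x _ => sq_nonneg _)) one_pos.le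
    _ = ∫ y in (0:ℝ)..1, h y ^ 2 := one_mul _
  have hg1 : (g 1) ^ 2 ≤ D ψ := by
    have hfc := hftc c 1 hc.1.le hc.2.le le_rfl
    rw [hgc, sub_zero] at hfc
    have hcs := sq_intervalIntegral_le hc.2.le (hhcont.mono (hsub hc.1.le le_rfl))
    rw [← hfc, hDint]
    calc (∫ y in c..1, h y) ^ 2 ≤ (1 - c) * ∫ y in c..1, h y ^ 2 := hcs
    _ ≤ 1 * ∫ y in (0:ℝ)..1, h y ^ 2 := by
        apply mul_le_mul (by linarith [hc.1]) (hmono c 1 hc.1.le hc.2.le le_rfl)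
          (intervalIntegral.integral_nonneg hc.2.le (fun x _ => sq_nonneg _)) one_pos.le
    _ = ∫ y in (0:ℝ)..1, h y ^ 2 := one_mul _
  -- relate deriv ψ at endpoints to g
  have hend : ∀ a : ℝ, a ∈ Icc (0:ℝ) 1 → (deriv ψ a) ^ 2 ≤ max ((g a) ^ 2) 0 := by
    intro a ha
    by_cases hd : DifferentiableAt ℝ ψ a
    · have : g a = deriv ψ a :=
        (hd.hasDerivAt.hasDerivWithinAt).derivWithin (hU a ha)
      rw [← this]; exact le_max_left _ _
    · rw [deriv_zero_of_not_differentiableAt hd]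
      simp
  refine ⟨?_, ?_, hDnonneg⟩
  · calc (deriv ψ 0) ^ 2 ≤ max ((g 0) ^ 2) 0 := hend 0 (by norm_num)
    _ ≤ D ψ := max_le hg0 hDnonneg
  · calc (deriv ψ 1) ^ 2 ≤ max ((g 1) ^ 2) 0 := hend 1 (by norm_num)
    _ ≤ D ψ := max_le hg1 hDnonneg

/-- An explicit admissible function with nonzero energy: `ψ(y) = y² − y`. -/
lemma exists_admissible_ne : ∃ ψ : ℝ → ℝ, Admissible ψ ∧ D ψ ≠ 0 := by
  refine ⟨fun y => y ^ 2 - y, ⟨?_, by norm_num, by norm_num⟩, ?_⟩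
  · exact ((contDiff_id.pow 2).sub contDiff_id).contDiffOn
  · have hd1 : deriv (fun y : ℝ => y ^ 2 - y) = fun y => 2 * y - 1 := by
      funext y
      have : HasDerivAt (fun y : ℝ => y ^ 2 - y) (2 * y - 1) y := by
        simpa using ((hasDerivAt_pow 2 y).fun_sub (hasDerivAt_id' y))
      exact this.deriv
    have hd2 : deriv (deriv (fun y : ℝ => y ^ 2 - y)) = fun _ => 2 := by
      rw [hd1]; funext y
      have : HasDerivAt (fun y : ℝ => 2 * y - 1) 2 y := by
        simpa using ((hasDerivAt_id y).const_mul 2).sub_const 1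
      exact this.deriv
    have : D (fun y : ℝ => y ^ 2 - y) = 4 := by
      unfold D
      rw [hd2]
      simp
      norm_num
    rw [this]; norm_num

/-- there is a constant `C ≥ 0`, depending only on `k0` and `k1`,
with `|Z(ψ)| ≤ C·D(ψ)` for every admissible `ψ`; consequently the set of Rayleigh
quotients defining `μ_c` is nonempty and bounded above (so `μ_c` is a finite real). -/
theorem mucSet_bound (k0 k1 : ℝ) :
    (∃ C : ℝ, 0 ≤ C ∧ ∀ ψ : ℝ → ℝ, Admissible ψ → |Z k0 k1 ψ| ≤ C * D ψ) ∧
    (mucSet k0 k1).Nonempty ∧ BddAbove (mucSet k0 k1) := by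
  set C : ℝ := |k0| + |k1| with hC
  have hCnonneg : 0 ≤ C := by positivity
  have hbound : ∀ ψ : ℝ → ℝ, Admissible ψ → |Z k0 k1 ψ| ≤ C * D ψ := by
    intro ψ hψ
    obtain ⟨h0, h1, hD⟩ := boundary_sq_le_D hψ
    have : |Z k0 k1 ψ| ≤ |k1| * (deriv ψ 1) ^ 2 + |k0| * (deriv ψ 0) ^ 2 := by
      unfold Z
      calc |k1 * (deriv ψ 1) ^ 2 + k0 * (deriv ψ 0) ^ 2|
          ≤ |k1 * (deriv ψ 1) ^ 2| + |k0 * (deriv ψ 0) ^ 2| := abs_add_le _ _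
      _ = |k1| * (deriv ψ 1) ^ 2 + |k0| * (deriv ψ 0) ^ 2 := by
          rw [abs_mul, abs_mul, abs_of_nonneg (sq_nonneg (deriv ψ 1)), abs_of_nonneg (sq_nonneg (deriv ψ 0))]
    calc |Z k0 k1 ψ| ≤ |k1| * (deriv ψ 1) ^ 2 + |k0| * (deriv ψ 0) ^ 2 := this
    _ ≤ |k1| * D ψ + |k0| * D ψ :=
        add_le_add (mul_le_mul_of_nonneg_left h1 (abs_nonneg k1))
          (mul_le_mul_of_nonneg_left h0 (abs_nonneg k0))
    _ = C * D ψ := by rw [hC]; ring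
  refine ⟨⟨C, hCnonneg, hbound⟩, ?_, ?_⟩
  · obtain ⟨ψ, hψ, hD⟩ := exists_admissible_ne
    exact ⟨Z k0 k1 ψ / D ψ, ψ, hψ, hD, rfl⟩
  · refine ⟨C, fun r hr => ?_⟩
    obtain ⟨ψ, hψ, hD, rfl⟩ := hr
    have hDpos : 0 < D ψ := lt_of_le_of_ne (boundary_sq_le_D hψ).2.2 (Ne.symm hD)
    rw [div_le_iff₀ hDpos]
    calc Z k0 k1 ψ ≤ |Z k0 k1 ψ| := le_abs_self _
    _ ≤ C * D ψ := hbound ψ hψ
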